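/- Let F be a field of characteristic 2, let C be a nonzero commutative associative unital F-algebra, and let α, β ∈ F. Suppose x, y, z ∈ C satisfy x² = α·1, y² = β·1, z² = α·β·1, and x·y = a·1 + b·x + c·y + d·z for some a, b, c, d ∈ F with a ≠ 0. Then the bilinear 2-fold Pfister form ⟨⟨α, β⟩⟩ is isotropic. -/

import Mathlib

/-- The bilinear `2`-fold Pfister form `⟨⟨γ, δ⟩⟩` on `F⁴`: the symmetric bilinear form with
Gram matrix `diag(1, γ, δ, γ * δ)`. -/
def twoPfister {F : Type*} [Field F] (γ δ : F) : (Fin 4 → F) → (Fin 4 → F) → F :=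
  fun v w => v 0 * w 0 + γ * (v 1 * w 1) + δ * (v 2 * w 2) + γ * δ * (v 3 * w 3)

/-- A bilinear form `B` on `F⁴` is isotropic if `B v v = 0` for some `v ≠ 0`. -/
def BilinIsotropic {F : Type*} [Field F] (B : (Fin 4 → F) → (Fin 4 → F) → F) : Prop :=
  ∃ v : Fin 4 → F, v ≠ 0 ∧ B v v = 0

lemma aux_char2_square {C : Type*} [CommRing C] (α β a b c d x y z : C)
    (h2 : (2 : C) = 0)
    (hx : x ^ 2 = α) (hy : y ^ 2 = β) (hz : z ^ 2 = α * β)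
    (hxy : x * y = a + b * x + c * y + d * z) :
    a ^ 2 + α * b ^ 2 + β * c ^ 2 + α * β * (d + 1) ^ 2 = 0 := by
  linear_combination (x * y + a + b * x + c * y + d * z) * hxy
    + (b ^ 2 - y ^ 2) * hx + (c ^ 2 - α) * hy + d ^ 2 * hz
    + (a ^ 2 + α * b ^ 2 + β * c ^ 2 + α * β * d ^ 2 + d * α * β
        + a * b * x + a * c * y + a * d * z + b * c * (x * y) + b * d * (x * z)
        + c * d * (y * z)) * h2

/-- Let `F` be a field of characteristic `2`, `C` a nonzero commutative
associative unital `F`-algebra, and `α, β ∈ F`.  Suppose `x, y, z ∈ C` satisfy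
`x ^ 2 = α • 1`, `y ^ 2 = β • 1`, `z ^ 2 = (α * β) • 1`, and
`x * y = a • 1 + b • x + c • y + d • z` for some `a, b, c, d ∈ F` with `a ≠ 0`.  Then the
bilinear `2`-fold Pfister form `⟨⟨α, β⟩⟩` is isotropic. -/
theorem pfister_isotropic_of_product_relation
    {F C : Type*} [Field F] [CharP F 2] [CommRing C] [Algebra F C] [Nontrivial C]
    (α β : F) (x y z : C)
    (hx : x ^ 2 = α • (1 : C)) (hy : y ^ 2 = β • (1 : C))
    (hz : z ^ 2 = (α * β) • (1 : C))
    (a b c d : F) (ha : a ≠ 0)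
    (hxy : x * y = a • (1 : C) + b • x + c • y + d • z) :
    BilinIsotropic (twoPfister α β) := by
  have hinj : Function.Injective (algebraMap F C) := (algebraMap F C).injective
  have h2F : (2 : F) = 0 := by exact_mod_cast CharP.cast_eq_zero F 2
  have h2C : (2 : C) = 0 := by
    calc (2 : C) = algebraMap F C (2 : F) := (map_ofNat _ 2).symm
      _ = algebraMap F C 0 := by rw [h2F]
      _ = 0 := map_zero _
  have key : algebraMap F C
      (a ^ 2 + α * b ^ 2 + β * c ^ 2 + α * β * (d + 1) ^ 2) = 0 := by
    have h := aux_char2_square (algebraMap F C α) (algebraMap F C β)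
      (algebraMap F C a) (algebraMap F C b) (algebraMap F C c) (algebraMap F C d)
      x y z h2C
      (by rw [hx]; simp [Algebra.smul_def])
      (by rw [hy]; simp [Algebra.smul_def])
      (by rw [hz]; simp [Algebra.smul_def])
      (by rw [hxy]; simp [Algebra.smul_def])
    simpa only [map_add, map_mul, map_pow, map_one] using h
  have keyF : a ^ 2 + α * b ^ 2 + β * c ^ 2 + α * β * (d + 1) ^ 2 = 0 := by
    apply hinj
    rw [key, map_zero]
  refine ⟨![a, b, c, d + 1], ?_, ?_⟩
  · intro h
    apply ha
    simpa using congrFun h 0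
  · have hv : twoPfister α β ![a, b, c, d + 1] ![a, b, c, d + 1] =
        a ^ 2 + α * b ^ 2 + β * c ^ 2 + α * β * (d + 1) ^ 2 := by
      simp only [twoPfister]
      norm_num [Fin.isValue, Matrix.cons_val_three, Matrix.cons_val_two]
      ring
    rw [hv, keyF]
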